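/- Let H and J be real symmetric positive definite (p+q)×(p+q) matrices, each partitioned conformably into blocks H = [[H₁₁, H₁₂],[H₂₁, H₂₂]] and J = [[J₁₁, J₁₂],[J₂₁, J₂₂]], where H₁₁ and J₁₁ are p×p. Then tr(H₁₁⁻¹ J₁₁) < tr(H⁻¹ J). (Monotonicity of the composite likelihood penalty term tr(H⁻¹J) under nesting of models.) -/

import Mathlib

open Matrix

section Helpers

variable {m n : Type*}

private lemma trace_fromBlocks_aux [Fintype m] [Fintype n] (A : Matrix m m ℝ) (B : Matrix m n ℝ)
    (C : Matrix n m ℝ) (D : Matrix n n ℝ) :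
    (fromBlocks A B C D).trace = A.trace + D.trace := by
  simp [Matrix.trace, Fintype.sum_sum_type, fromBlocks]

private lemma posDef_trace_pos [Fintype n] [Nonempty n] {M : Matrix n n ℝ}
    (hM : M.PosDef) : 0 < M.trace := by
  classical
  have h : ∀ i, 0 < M i i := fun i => by
    have := hM.dotProduct_mulVec_pos (x := Pi.single i 1) (by intro h; simpa using congrFun h i)
    simpa [dotProduct, mulVec, Pi.single_apply, Finset.sum_ite_eq] using this
  exact Finset.sum_pos (fun i _ => h i) Finset.univ_nonempty

open scoped MatrixOrder in
/-- trace of product of two real positive definite matrices is positive -/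
private lemma trace_mul_pos_of_posDef [Fintype n] [DecidableEq n] [Nonempty n]
    {P Q : Matrix n n ℝ} (hP : P.PosDef) (hQ : Q.PosDef) : 0 < (P * Q).trace := by
  classical
  set R := CFC.sqrt Q with hRdef
  have hRmul : R * R = Q := CFC.sqrt_mul_sqrt_self Q hQ.posSemidef.nonneg
  have hRsd : R.PosSemidef := (CFC.sqrt_nonneg Q).posSemidef
  have hRdet : IsUnit R.det := by
    rw [isUnit_iff_ne_zero]
    intro h0
    have h2 : R.det * R.det = Q.det := by rw [← det_mul, hRmul]
    rw [h0, zero_mul] at h2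
    exact hQ.det_pos.ne' h2.symm
  have hRT : Rᵀ = R := by
    rw [← conjTranspose_eq_transpose_of_trivial]; exact hRsd.1
  have hkey : (R * P * R).PosDef := by
    refine Matrix.PosDef.of_dotProduct_mulVec_pos ?_ ?_
    · have h3 : (R * P * R)ᴴ = Rᴴ * Pᴴ * Rᴴ := by
        rw [conjTranspose_mul, conjTranspose_mul, Matrix.mul_assoc]
      rw [IsHermitian, h3, hRsd.1, hP.1]
    · intro x hx
      have hRx : R *ᵥ x ≠ 0 := by
        intro h0
        apply hx
        have := congrArg (fun v => R⁻¹ *ᵥ v) h0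
        simpa [mulVec_mulVec, Matrix.nonsing_inv_mul R hRdet] using this
      have hpo := hP.dotProduct_mulVec_pos hRx
      have hrw : star x ⬝ᵥ (R * P * R) *ᵥ x = star (R *ᵥ x) ⬝ᵥ P *ᵥ (R *ᵥ x) := by
        simp only [star_trivial, ← mulVec_mulVec]
        rw [dotProduct_mulVec x R, ← mulVec_transpose, hRT]
      rw [hrw]; exact hpo
  have htr : (P * Q).trace = (R * P * R).trace := by
    rw [← hRmul, ← Matrix.mul_assoc, trace_mul_comm (P * R) R, ← Matrix.mul_assoc]
  rw [htr]
  exact posDef_trace_pos hkey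

end Helpers

/-- Monotonicity of the composite likelihood penalty term: if `H` and `J` are
symmetric positive definite `(p+q)×(p+q)` matrices partitioned conformably into
blocks with `H₁₁, J₁₁` of size `p×p` (and `q ≥ 1`), then
`tr(H₁₁⁻¹ J₁₁) < tr(H⁻¹ J)`. -/
theorem trace_penalty_strict_mono (p q : ℕ) (hq : 0 < q)
    (H11 : Matrix (Fin p) (Fin p) ℝ) (H12 : Matrix (Fin p) (Fin q) ℝ)
    (H21 : Matrix (Fin q) (Fin p) ℝ) (H22 : Matrix (Fin q) (Fin q) ℝ)
    (J11 : Matrix (Fin p) (Fin p) ℝ) (J12 : Matrix (Fin p) (Fin q) ℝ)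
    (J21 : Matrix (Fin q) (Fin p) ℝ) (J22 : Matrix (Fin q) (Fin q) ℝ)
    (hH : (Matrix.fromBlocks H11 H12 H21 H22).PosDef)
    (hJ : (Matrix.fromBlocks J11 J12 J21 J22).PosDef) :
    (H11⁻¹ * J11).trace <
      ((Matrix.fromBlocks H11 H12 H21 H22)⁻¹ *
        (Matrix.fromBlocks J11 J12 J21 J22)).trace := by
  classical
  haveI : Nonempty (Fin q) := ⟨⟨0, hq⟩⟩
  -- symmetry of the blocks of H
  have hHsym : fromBlocks H11ᴴ H21ᴴ H12ᴴ H22ᴴ = fromBlocks H11 H12 H21 H22 := by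
    rw [← fromBlocks_conjTranspose]; exact hH.1
  have hA_sym : H11ᴴ = H11 := congrArg Matrix.toBlocks₁₁ hHsym
  have hC_sym : H21ᴴ = H12 := congrArg Matrix.toBlocks₁₂ hHsym
  have hB_sym : H12ᴴ = H21 := congrArg Matrix.toBlocks₂₁ hHsym
  have hD_sym : H22ᴴ = H22 := congrArg Matrix.toBlocks₂₂ hHsym
  -- symmetry of the blocks of J
  have hJsym : fromBlocks J11ᴴ J21ᴴ J12ᴴ J22ᴴ = fromBlocks J11 J12 J21 J22 := by
    rw [← fromBlocks_conjTranspose]; exact hJ.1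
  have hJ11_sym : J11ᴴ = J11 := congrArg Matrix.toBlocks₁₁ hJsym
  have hJ21_sym : J21ᴴ = J12 := congrArg Matrix.toBlocks₁₂ hJsym
  have hJ12_sym : J12ᴴ = J21 := congrArg Matrix.toBlocks₂₁ hJsym
  have hJ22_sym : J22ᴴ = J22 := congrArg Matrix.toBlocks₂₂ hJsym
  -- H11 is positive definite
  have hA : H11.PosDef := by
    refine Matrix.PosDef.of_dotProduct_mulVec_pos hA_sym (fun x hx => ?_)
    have hne : (Sum.elim x (0 : Fin q → ℝ)) ≠ 0 := by
      intro h; exact hx (funext fun i => congrFun h (Sum.inl i))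
    have := hH.dotProduct_mulVec_pos hne
    simpa [fromBlocks_mulVec, sumElim_dotProduct_sumElim] using this
  haveI iA : Invertible H11 := hA.isUnit.invertible
  have hAA' : H11 * H11⁻¹ = 1 :=
    Matrix.mul_nonsing_inv H11 (isUnit_iff_ne_zero.mpr hA.det_pos.ne')
  -- the Schur complement
  set K : Matrix (Fin q) (Fin p) ℝ := H21 * H11⁻¹ with hKdef
  set S : Matrix (Fin q) (Fin q) ℝ := H22 - K * H12 with hSdef
  have hSeq : S = H22 - H21 * H11⁻¹ * H12 := by rw [hSdef, hKdef]
  clear_value K S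
  have hS : S.PosDef := by
    refine Matrix.PosDef.of_dotProduct_mulVec_pos ?_ ?_
    · show Sᴴ = S
      rw [hSeq]
      simp only [conjTranspose_sub, conjTranspose_mul, conjTranspose_nonsing_inv, hA_sym,
        hB_sym, hC_sym, hD_sym, Matrix.mul_assoc]
    · intro y hy
      have hzne : (Sum.elim (-((H11⁻¹ * H12) *ᵥ y)) y) ≠ 0 := by
        intro h; exact hy (funext fun i => congrFun h (Sum.inr i))
      have hpos := hH.dotProduct_mulVec_pos hzne
      have hsc := schur_complement_eq₁₁ (A := H11) H12 H22
        (-((H11⁻¹ * H12) *ᵥ y)) y hA_sym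
      rw [hB_sym, neg_add_cancel] at hsc
      simp only [star_zero, zero_vecMul, zero_dotProduct, zero_add] at hsc
      rw [hSeq, dotProduct_mulVec, ← hsc, ← dotProduct_mulVec]
      exact hpos
  have hSS' : S * S⁻¹ = 1 :=
    Matrix.mul_nonsing_inv S (isUnit_iff_ne_zero.mpr hS.det_pos.ne')
  have hKH : Kᴴ = H11⁻¹ * H12 := by
    rw [hKdef, conjTranspose_mul, conjTranspose_nonsing_inv, hA_sym, hC_sym]
  have hAK : H11 * Kᴴ = H12 := by
    rw [hKH, ← Matrix.mul_assoc, hAA', Matrix.one_mul]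
  have hCK : H21 * Kᴴ = H22 - S := by
    rw [hKH, ← Matrix.mul_assoc, hSdef, sub_sub_cancel, hKdef]
  have hAKw : ∀ {r : Type} (W : Matrix (Fin q) r ℝ), H11 * (Kᴴ * W) = H12 * W := by
    intro r W; rw [← Matrix.mul_assoc, hAK]
  have hCKw : ∀ {r : Type} (W : Matrix (Fin q) r ℝ), H21 * (Kᴴ * W) = (H22 - S) * W := by
    intro r W; rw [← Matrix.mul_assoc, hCK]
  -- the explicit inverse of the block matrix
  have e11 : H11 * (H11⁻¹ + Kᴴ * S⁻¹ * K) + H12 * (-(S⁻¹ * K)) = 1 := by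
    simp only [Matrix.mul_add, Matrix.mul_neg, Matrix.mul_assoc]
    rw [hAA', hAKw]
    abel
  have e12 : H11 * (-(Kᴴ * S⁻¹)) + H12 * S⁻¹ = 0 := by
    simp only [Matrix.mul_neg, Matrix.mul_assoc]
    rw [hAKw]
    abel
  have e21 : H21 * (H11⁻¹ + Kᴴ * S⁻¹ * K) + H22 * (-(S⁻¹ * K)) = 0 := by
    simp only [Matrix.mul_add, Matrix.mul_neg, Matrix.mul_assoc]
    rw [hCKw, Matrix.sub_mul, ← Matrix.mul_assoc S, hSS', Matrix.one_mul, ← hKdef]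
    abel
  have e22 : H21 * (-(Kᴴ * S⁻¹)) + H22 * S⁻¹ = 1 := by
    simp only [Matrix.mul_neg, Matrix.mul_assoc]
    rw [hCKw, Matrix.sub_mul, hSS']
    abel
  have hinv : (fromBlocks H11 H12 H21 H22)⁻¹ =
      fromBlocks (H11⁻¹ + Kᴴ * S⁻¹ * K) (-(Kᴴ * S⁻¹)) (-(S⁻¹ * K)) S⁻¹ := by
    apply Matrix.inv_eq_right_inv
    rw [fromBlocks_multiply, e11, e12, e21, e22, fromBlocks_one]
  -- the correction matrix
  set N : Matrix (Fin q) (Fin q) ℝ :=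
    K * J11 * Kᴴ - J21 * Kᴴ - K * J12 + J22 with hNdef
  clear_value N
  have hN : N.PosDef := by
    refine Matrix.PosDef.of_dotProduct_mulVec_pos ?_ ?_
    · show Nᴴ = N
      rw [hNdef]
      simp only [conjTranspose_add, conjTranspose_sub, conjTranspose_mul,
        conjTranspose_conjTranspose, hJ11_sym, hJ12_sym, hJ21_sym, hJ22_sym, Matrix.mul_assoc]
      abel
    · intro x hx
      have hyne : (Sum.elim (-(Kᴴ *ᵥ x)) x) ≠ 0 := by
        intro h; exact hx (funext fun i => congrFun h (Sum.inr i))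
      have hpos := hJ.dotProduct_mulVec_pos hyne
      have hbridge : ∀ (M : Matrix (Fin q) (Fin p) ℝ) (v : Fin p → ℝ),
          x ⬝ᵥ (M *ᵥ v) = (Mᴴ *ᵥ x) ⬝ᵥ v := by
        intro M v
        rw [dotProduct_mulVec, conjTranspose_eq_transpose_of_trivial, ← mulVec_transpose]
      have hexp : star (Sum.elim (-(Kᴴ *ᵥ x)) x) ⬝ᵥ
          (fromBlocks J11 J12 J21 J22) *ᵥ (Sum.elim (-(Kᴴ *ᵥ x)) x)
          = star x ⬝ᵥ N *ᵥ x := by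
        simp only [star_trivial, fromBlocks_mulVec, sumElim_dotProduct_sumElim,
          Sum.elim_comp_inl, Sum.elim_comp_inr, hNdef,
          Matrix.add_mulVec, Matrix.sub_mulVec, ← mulVec_mulVec, mulVec_neg, neg_dotProduct,
          dotProduct_neg, dotProduct_add, dotProduct_sub]
        rw [hbridge K (J11 *ᵥ (Kᴴ *ᵥ x)), hbridge K (J12 *ᵥ x)]
        ring
      rw [← hexp]; exact hpos
  -- compute the trace
  have htr : ((fromBlocks H11 H12 H21 H22)⁻¹ * (fromBlocks J11 J12 J21 J22)).trace
      = (H11⁻¹ * J11).trace + (S⁻¹ * N).trace := by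
    rw [hinv, fromBlocks_multiply, trace_fromBlocks_aux, trace_add, trace_add]
    have e1 : ((H11⁻¹ + Kᴴ * S⁻¹ * K) * J11).trace
        = (H11⁻¹ * J11).trace + (S⁻¹ * (K * J11 * Kᴴ)).trace := by
      rw [Matrix.add_mul, trace_add]
      congr 1
      simp only [Matrix.mul_assoc]
      rw [trace_mul_comm (Kᴴ)]
      simp only [Matrix.mul_assoc]
    have e2 : ((-(Kᴴ * S⁻¹)) * J21).trace = -(S⁻¹ * (J21 * Kᴴ)).trace := by
      rw [Matrix.neg_mul, trace_neg]
      congr 1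
      simp only [Matrix.mul_assoc]
      rw [trace_mul_comm (Kᴴ)]
      simp only [Matrix.mul_assoc]
    have e3 : ((-(S⁻¹ * K)) * J12).trace = -(S⁻¹ * (K * J12)).trace := by
      rw [Matrix.neg_mul, trace_neg]
      congr 1
      simp only [Matrix.mul_assoc]
    have e4 : (S⁻¹ * N).trace = (S⁻¹ * (K * J11 * Kᴴ)).trace - (S⁻¹ * (J21 * Kᴴ)).trace
        - (S⁻¹ * (K * J12)).trace + (S⁻¹ * J22).trace := by
      rw [hNdef]
      simp only [Matrix.mul_add, Matrix.mul_sub, trace_add, trace_sub, Matrix.mul_assoc]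
    rw [e1, e2, e3, e4]
    ring
  rw [htr]
  have hfin : 0 < (S⁻¹ * N).trace := trace_mul_pos_of_posDef hS.inv hN
  linarith
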